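/- For every z ∈ ℍ, the increment of the quaternionic exponential admits the expansion exp(z + h) − exp z = ∑_{k=0}^∞ c_k(z) · h · z^k + ω(h), where c_k(z) = ∑_{j=0}^∞ z^j/(j+k+1)! and ‖ω(h)‖/‖h‖ → 0 as h → 0; moreover ∑_{k=0}^∞ ‖c_k(z)‖ · ‖z^k‖ < ∞, so exp is H-differentiable at z with witness sequences A_k = c_k(z), B_k = z^k. -/

import Mathlib

open scoped Quaternion
open Filter Topology

/-- A function `f : ℍ → ℍ` is H-differentiable at `z₀` with H-derivative `d` if there exist
sequences of quaternions `A, B` with `∑ ‖A k‖ * ‖B k‖ < ∞` such that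
`f (z₀ + h) - f z₀ = ∑' k, A k * h * B k + ω h` with `‖ω h‖ / ‖h‖ → 0` as `h → 0`,
and `d = ∑' k, A k * B k`. -/
def HDiffAt (f : ℍ[ℝ] → ℍ[ℝ]) (z₀ d : ℍ[ℝ]) : Prop :=
  ∃ A B : ℕ → ℍ[ℝ],
    (Summable fun k => ‖A k‖ * ‖B k‖) ∧
    Filter.Tendsto
      (fun h : ℍ[ℝ] => ‖f (z₀ + h) - f z₀ - ∑' k, A k * h * B k‖ / ‖h‖)
      (𝓝[≠] (0 : ℍ[ℝ])) (𝓝 0) ∧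
    d = ∑' k, A k * B k

/-- The quaternionic exponential, defined by its power series. -/
noncomputable def qexp (z : ℍ[ℝ]) : ℍ[ℝ] := ∑' n : ℕ, ((n.factorial : ℝ)⁻¹) • z ^ n

namespace QexpAux

noncomputable def S (z h : ℍ[ℝ]) (n : ℕ) : ℍ[ℝ] :=
  ∑ i ∈ Finset.range n, z ^ (n - 1 - i) * h * z ^ i

noncomputable def r (z h : ℍ[ℝ]) (n : ℕ) : ℍ[ℝ] := (z + h) ^ n - z ^ n - S z h n

lemma S_zero (z h : ℍ[ℝ]) : S z h 0 = 0 := by simp [S]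

lemma S_succ (z h : ℍ[ℝ]) (n : ℕ) : S z h (n + 1) = z * S z h n + h * z ^ n := by
  unfold S
  rw [Finset.sum_range_succ, Finset.mul_sum]
  simp only [Nat.add_sub_cancel]
  rw [Nat.sub_self, pow_zero, one_mul]
  congr 1
  refine Finset.sum_congr rfl fun i hi => ?_
  have hi' : i < n := Finset.mem_range.mp hi
  have : n - i = (n - 1 - i) + 1 := by omega
  rw [this, pow_succ']
  noncomm_ring

lemma norm_S_le (z h : ℍ[ℝ]) (n : ℕ) :
    ‖S z h n‖ ≤ (n : ℝ) * ‖z‖ ^ (n - 1) * ‖h‖ := by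
  calc ‖S z h n‖ ≤ ∑ i ∈ Finset.range n, ‖z ^ (n - 1 - i) * h * z ^ i‖ :=
        norm_sum_le _ _
    _ = ∑ i ∈ Finset.range n, ‖z‖ ^ (n - 1) * ‖h‖ := by
        refine Finset.sum_congr rfl fun i hi => ?_
        have hi' : i < n := Finset.mem_range.mp hi
        rw [norm_mul, norm_mul, norm_pow, norm_pow]
        have : (n - 1 - i) + i = n - 1 := by omega
        rw [mul_right_comm, ← pow_add, this]
    _ = (n : ℝ) * ‖z‖ ^ (n - 1) * ‖h‖ := by
        rw [Finset.sum_const, Finset.card_range, nsmul_eq_mul, mul_assoc]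

lemma norm_pow_sub_pow_le (z h : ℍ[ℝ]) (n : ℕ) :
    ‖(z + h) ^ n - z ^ n‖ ≤ (‖z‖ + ‖h‖) ^ n - ‖z‖ ^ n := by
  induction n with
  | zero => simp
  | succ n ih =>
      have key : (z + h) ^ (n + 1) - z ^ (n + 1)
          = z * ((z + h) ^ n - z ^ n) + h * (z + h) ^ n := by
        rw [pow_succ', pow_succ', add_mul]; noncomm_ring
      rw [key]
      have h1 : ‖z * ((z + h) ^ n - z ^ n)‖ ≤ ‖z‖ * ((‖z‖ + ‖h‖) ^ n - ‖z‖ ^ n) := by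
        rw [norm_mul]; exact mul_le_mul_of_nonneg_left ih (norm_nonneg _)
      have h2 : ‖h * (z + h) ^ n‖ ≤ ‖h‖ * (‖z‖ + ‖h‖) ^ n := by
        rw [norm_mul, norm_pow]
        exact mul_le_mul_of_nonneg_left (pow_le_pow_left₀ (norm_nonneg _)
          (norm_add_le z h) n) (norm_nonneg _)
      calc ‖z * ((z + h) ^ n - z ^ n) + h * (z + h) ^ n‖
          ≤ ‖z * ((z + h) ^ n - z ^ n)‖ + ‖h * (z + h) ^ n‖ := norm_add_le _ _
        _ ≤ ‖z‖ * ((‖z‖ + ‖h‖) ^ n - ‖z‖ ^ n) + ‖h‖ * (‖z‖ + ‖h‖) ^ n := add_le_add h1 h2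
        _ = (‖z‖ + ‖h‖) ^ (n + 1) - ‖z‖ ^ (n + 1) := by rw [pow_succ', pow_succ']; ring

lemma cast_mul_pow_pred (a : ℝ) (n : ℕ) : (n : ℝ) * (a * a ^ (n - 1)) = (n : ℝ) * a ^ n := by
  cases n with
  | zero => simp
  | succ m => rw [Nat.add_sub_cancel, ← pow_succ']

lemma r_succ (z h : ℍ[ℝ]) (n : ℕ) :
    r z h (n + 1) = z * r z h n + h * ((z + h) ^ n - z ^ n) := by
  unfold r
  rw [S_succ, pow_succ', pow_succ', add_mul]
  noncomm_ring

lemma norm_r_le (z h : ℍ[ℝ]) (n : ℕ) :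
    ‖r z h n‖ ≤ (‖z‖ + ‖h‖) ^ n - ‖z‖ ^ n - (n : ℝ) * ‖z‖ ^ (n - 1) * ‖h‖ := by
  set a := ‖z‖ with ha
  set b := ‖h‖ with hb
  induction n with
  | zero => simp [r, S_zero]
  | succ n ih =>
      rw [r_succ]
      have h1 : ‖z * r z h n‖ ≤ a * ((a + b) ^ n - a ^ n - (n : ℝ) * a ^ (n - 1) * b) := by
        rw [norm_mul]; exact mul_le_mul_of_nonneg_left ih (norm_nonneg _)
      have h2 : ‖h * ((z + h) ^ n - z ^ n)‖ ≤ b * ((a + b) ^ n - a ^ n) := by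
        rw [norm_mul]
        exact mul_le_mul_of_nonneg_left (norm_pow_sub_pow_le z h n) (norm_nonneg _)
      have key : a * ((a + b) ^ n - a ^ n - (n : ℝ) * a ^ (n - 1) * b) + b * ((a + b) ^ n - a ^ n)
          = (a + b) ^ (n + 1) - a ^ (n + 1) - ((n : ℕ) + 1 : ℝ) * a ^ n * b := by
        have := cast_mul_pow_pred a n
        rw [pow_succ' (a + b), pow_succ' a]
        linear_combination (-b) * this
      calc ‖z * r z h n + h * ((z + h) ^ n - z ^ n)‖
          ≤ ‖z * r z h n‖ + ‖h * ((z + h) ^ n - z ^ n)‖ := norm_add_le _ _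
        _ ≤ a * ((a + b) ^ n - a ^ n - (n : ℝ) * a ^ (n - 1) * b) + b * ((a + b) ^ n - a ^ n) :=
            add_le_add h1 h2
        _ = (a + b) ^ (n + 1) - a ^ (n + 1) - ((n : ℕ) + 1 : ℝ) * a ^ n * b := key
        _ = (a + b) ^ (n + 1) - a ^ (n + 1) - ((n + 1 : ℕ) : ℝ) * a ^ (n + 1 - 1) * b := by
            push_cast [Nat.add_sub_cancel]; ring

end QexpAux

namespace QexpAux

lemma fact_pos (n : ℕ) : (0 : ℝ) < (n.factorial : ℝ) := by
  exact_mod_cast n.factorial_pos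

lemma norm_inv_fact_smul (w : ℍ[ℝ]) (n : ℕ) :
    ‖((n.factorial : ℝ)⁻¹) • w ^ n‖ = ‖w‖ ^ n / (n.factorial : ℝ) := by
  rw [norm_smul, norm_pow, Real.norm_eq_abs, abs_inv, Nat.abs_cast, inv_mul_eq_div]

lemma summable_expSeries (w : ℍ[ℝ]) : Summable fun n => ((n.factorial : ℝ)⁻¹) • w ^ n := by
  refine Summable.of_norm ?_
  simp only [norm_inv_fact_smul]
  exact Real.summable_pow_div_factorial ‖w‖

lemma summable_n_pow (a b : ℝ) :
    Summable fun n : ℕ => (n : ℝ) * a ^ (n - 1) * b / n.factorial := by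
  rw [← summable_nat_add_iff 1]
  have : (fun n : ℕ => ((n + 1 : ℕ) : ℝ) * a ^ (n + 1 - 1) * b / ((n + 1).factorial : ℝ))
      = fun n : ℕ => a ^ n / (n.factorial : ℝ) * b := by
    funext n
    rw [Nat.add_sub_cancel, Nat.factorial_succ]
    have h1 : ((n:ℝ) + 1) ≠ 0 := by positivity
    have h2 : (n.factorial : ℝ) ≠ 0 := (fact_pos n).ne'
    push_cast
    field_simp
  rw [this]
  exact (Real.summable_pow_div_factorial a).mul_right b

lemma summable_S_smul (z h : ℍ[ℝ]) :
    Summable fun n => ((n.factorial : ℝ)⁻¹) • S z h n := by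
  refine Summable.of_norm ((summable_n_pow ‖z‖ ‖h‖).of_nonneg_of_le
    (fun n => norm_nonneg _) fun n => ?_)
  rw [norm_smul, Real.norm_eq_abs, abs_inv, Nat.abs_cast, div_eq_inv_mul] at *
  calc (n.factorial : ℝ)⁻¹ * ‖S z h n‖
      ≤ (n.factorial : ℝ)⁻¹ * ((n : ℝ) * ‖z‖ ^ (n - 1) * ‖h‖) := by
        exact mul_le_mul_of_nonneg_left (norm_S_le z h n) (by positivity)
    _ = (n.factorial : ℝ)⁻¹ * ((n : ℝ) * ‖z‖ ^ (n - 1) * ‖h‖) := rfl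

lemma summable_R (a b : ℝ) :
    Summable fun n : ℕ =>
      ((a + b) ^ n - a ^ n - (n : ℝ) * a ^ (n - 1) * b) / n.factorial := by
  have h1 := Real.summable_pow_div_factorial (a + b)
  have h2 := Real.summable_pow_div_factorial a
  have h3 := summable_n_pow a b
  have : (fun n : ℕ => ((a + b) ^ n - a ^ n - (n : ℝ) * a ^ (n - 1) * b) / n.factorial)
      = fun n : ℕ => (a + b) ^ n / n.factorial - a ^ n / n.factorial
        - (n : ℝ) * a ^ (n - 1) * b / n.factorial := by
    funext n; ring
  rw [this]
  exact (h1.sub h2).sub h3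

lemma summable_r_smul (z h : ℍ[ℝ]) :
    Summable fun n => ((n.factorial : ℝ)⁻¹) • r z h n := by
  refine Summable.of_norm ((summable_R ‖z‖ ‖h‖).of_nonneg_of_le
    (fun n => norm_nonneg _) fun n => ?_)
  rw [norm_smul, Real.norm_eq_abs, abs_inv, Nat.abs_cast, div_eq_inv_mul]
  exact mul_le_mul_of_nonneg_left (norm_r_le z h n) (by positivity)

end QexpAux

namespace QexpAux

noncomputable def F (z h : ℍ[ℝ]) (p : ℕ × ℕ) : ℍ[ℝ] :=
  ((((p.2 + p.1 + 1).factorial : ℝ)⁻¹) • z ^ p.2) * h * z ^ p.1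

lemma fact_fact_le (j k : ℕ) : j.factorial * k.factorial ≤ (j + k + 1).factorial :=
  le_trans (Nat.le_of_dvd (Nat.factorial_pos _)
    (Nat.factorial_mul_factorial_dvd_factorial_add j k))
    (Nat.factorial_le (by omega))

lemma inv_fact_le (j k : ℕ) :
    (((j + k + 1).factorial : ℝ))⁻¹ ≤ ((j.factorial : ℝ))⁻¹ * ((k.factorial : ℝ))⁻¹ := by
  rw [← mul_inv]
  apply inv_anti₀
  · positivity
  · exact_mod_cast fact_fact_le j k

lemma norm_F_le (z h : ℍ[ℝ]) (p : ℕ × ℕ) :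
    ‖F z h p‖ ≤ (‖h‖ * (‖z‖ ^ p.1 / p.1.factorial)) * (‖z‖ ^ p.2 / p.2.factorial) := by
  obtain ⟨k, j⟩ := p
  simp only [F, norm_mul, norm_smul, Real.norm_eq_abs, abs_inv, Nat.abs_cast, norm_pow]
  calc ((((j + k + 1).factorial : ℝ))⁻¹ * ‖z‖ ^ j) * ‖h‖ * ‖z‖ ^ k
      ≤ ((((j.factorial : ℝ))⁻¹ * ((k.factorial : ℝ))⁻¹) * ‖z‖ ^ j) * ‖h‖ * ‖z‖ ^ k := by
        have := inv_fact_le j k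
        have h1 : (0:ℝ) ≤ ‖z‖ ^ j := by positivity
        have h2 : (0:ℝ) ≤ ‖h‖ := norm_nonneg _
        have h3 : (0:ℝ) ≤ ‖z‖ ^ k := by positivity
        gcongr
    _ = (‖h‖ * (‖z‖ ^ k / k.factorial)) * (‖z‖ ^ j / j.factorial) := by
        field_simp
  
lemma summable_norm_F (z h : ℍ[ℝ]) : Summable fun p => ‖F z h p‖ := by
  have hb : Summable fun p : ℕ × ℕ =>
      (‖h‖ * (‖z‖ ^ p.1 / p.1.factorial)) * (‖z‖ ^ p.2 / p.2.factorial) := by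
    apply Summable.mul_of_nonneg
      ((Real.summable_pow_div_factorial ‖z‖).mul_left ‖h‖)
      (Real.summable_pow_div_factorial ‖z‖)
    · intro k; positivity
    · intro j; positivity
  exact hb.of_nonneg_of_le (fun p => norm_nonneg _) (norm_F_le z h)

lemma summable_F (z h : ℍ[ℝ]) : Summable (F z h) := (summable_norm_F z h).of_norm

lemma tsum_antidiagonal (f : ℕ × ℕ → ℍ[ℝ]) (hf : Summable f) :
    ∑' p : ℕ × ℕ, f p
      = ∑' n : ℕ, ∑' p : {x // x ∈ Finset.HasAntidiagonal.antidiagonal n}, f (p : ℕ × ℕ) := by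
  have h1 : ∑' (σ : Σ n : ℕ, {x // x ∈ Finset.HasAntidiagonal.antidiagonal n}),
      f ((Finset.HasAntidiagonal.sigmaAntidiagonalEquivProd (A := ℕ)) σ) = ∑' p : ℕ × ℕ, f p :=
    Equiv.tsum_eq _ _
  have h2 : Summable (fun σ : Σ n : ℕ, {x // x ∈ Finset.HasAntidiagonal.antidiagonal n} =>
      f ((Finset.HasAntidiagonal.sigmaAntidiagonalEquivProd (A := ℕ)) σ)) :=
    (Finset.HasAntidiagonal.sigmaAntidiagonalEquivProd (A := ℕ)).summable_iff.mpr hf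
  have h3 := Summable.tsum_sigma'
    (f := fun σ : Σ n : ℕ, {x // x ∈ Finset.HasAntidiagonal.antidiagonal n} =>
      f ((Finset.HasAntidiagonal.sigmaAntidiagonalEquivProd (A := ℕ)) σ))
    (fun n => Summable.of_finite) h2
  rw [← h1, h3]
  rfl

lemma tsum_F_eq_S (z h : ℍ[ℝ]) :
    ∑' p : ℕ × ℕ, F z h p = ∑' n, ((n.factorial : ℝ)⁻¹) • S z h n := by
  rw [tsum_antidiagonal (F z h) (summable_F z h)]
  rw [Summable.tsum_eq_zero_add (summable_S_smul z h)]
  rw [S_zero, smul_zero, zero_add]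
  refine tsum_congr fun n => ?_
  rw [Finset.tsum_subtype (Finset.HasAntidiagonal.antidiagonal n) (F z h)]
  have step1 : ∑ p ∈ Finset.HasAntidiagonal.antidiagonal n, F z h p
      = ∑ p ∈ Finset.HasAntidiagonal.antidiagonal n,
        ((((n + 1).factorial : ℝ)⁻¹) • z ^ p.2) * h * z ^ p.1 := by
    refine Finset.sum_congr rfl fun p hp => ?_
    have hmem : p.1 + p.2 = n := Finset.HasAntidiagonal.mem_antidiagonal.mp hp
    have : p.2 + p.1 + 1 = n + 1 := by omega
    simp only [F, this]
  rw [step1, Finset.Nat.sum_antidiagonal_eq_sum_range_succ_mk]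
  have step2 : ∀ k, ((((n + 1).factorial : ℝ)⁻¹) • z ^ (n - k)) * h * z ^ k
      = (((n + 1).factorial : ℝ)⁻¹) • (z ^ (n - k) * h * z ^ k) := by
    intro k; rw [smul_mul_assoc, smul_mul_assoc]
  simp only [step2]
  rw [← Finset.smul_sum]
  congr 1

lemma tsum_F_eq_T (z h : ℍ[ℝ]) :
    ∑' p : ℕ × ℕ, F z h p
      = ∑' k : ℕ, (∑' j : ℕ, (((j + k + 1).factorial : ℝ)⁻¹) • z ^ j) * h * z ^ k := by
  rw [Summable.tsum_prod' (summable_F z h) (summable_F z h).prod_factor]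
  refine tsum_congr fun k => ?_
  have : ∀ j : ℕ, F z h (k, j)
      = ((((j + k + 1).factorial : ℝ)⁻¹) • z ^ j) * (h * z ^ k) := by
    intro j; simp only [F, mul_assoc]
  simp only [this]
  rw [tsum_mul_right, ← mul_assoc]

end QexpAux

namespace QexpAux

lemma n_pow_succ (a b : ℝ) (n : ℕ) :
    (((n + 1 : ℕ)) : ℝ) * a ^ (n + 1 - 1) * b / ((n + 1).factorial : ℝ)
      = a ^ n / (n.factorial : ℝ) * b := by
  rw [Nat.add_sub_cancel, Nat.factorial_succ]
  have h1 : ((n:ℝ) + 1) ≠ 0 := by positivity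
  have h2 : (n.factorial : ℝ) ≠ 0 := (fact_pos n).ne'
  push_cast
  field_simp

lemma real_exp_tsum (x : ℝ) : Real.exp x = ∑' n : ℕ, x ^ n / (n.factorial : ℝ) := by
  rw [Real.exp_eq_exp_ℝ, NormedSpace.exp_eq_tsum_div]

lemma tsum_third (a b : ℝ) :
    ∑' n : ℕ, (n : ℝ) * a ^ (n - 1) * b / (n.factorial : ℝ) = Real.exp a * b := by
  rw [Summable.tsum_eq_zero_add (summable_n_pow a b)]
  simp only [Nat.cast_zero, zero_mul, zero_div, zero_add]
  have : (fun n : ℕ => (((n + 1 : ℕ)) : ℝ) * a ^ (n + 1 - 1) * b / ((n + 1).factorial : ℝ))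
      = fun n : ℕ => a ^ n / (n.factorial : ℝ) * b := funext fun n => n_pow_succ a b n
  rw [this, tsum_mul_right, ← real_exp_tsum]

lemma tsum_R_eq (a b : ℝ) :
    ∑' n : ℕ, ((a + b) ^ n - a ^ n - (n : ℝ) * a ^ (n - 1) * b) / (n.factorial : ℝ)
      = Real.exp (a + b) - Real.exp a - Real.exp a * b := by
  have h1 := Real.summable_pow_div_factorial (a + b)
  have h2 := Real.summable_pow_div_factorial a
  have h3 := summable_n_pow a b
  have hfun : (fun n : ℕ => ((a + b) ^ n - a ^ n - (n : ℝ) * a ^ (n - 1) * b) / n.factorial)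
      = fun n : ℕ => ((a + b) ^ n / n.factorial - a ^ n / n.factorial)
        - (n : ℝ) * a ^ (n - 1) * b / n.factorial := by
    funext n; ring
  rw [hfun, Summable.tsum_sub (h1.sub h2) h3, Summable.tsum_sub h1 h2, tsum_third, ← real_exp_tsum,
    ← real_exp_tsum]

lemma norm_smul_r_le (z h : ℍ[ℝ]) (n : ℕ) :
    ‖((n.factorial : ℝ)⁻¹) • r z h n‖
      ≤ ((‖z‖ + ‖h‖) ^ n - ‖z‖ ^ n - (n : ℝ) * ‖z‖ ^ (n - 1) * ‖h‖) / (n.factorial : ℝ) := by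
  rw [norm_smul, Real.norm_eq_abs, abs_inv, Nat.abs_cast, div_eq_inv_mul]
  exact mul_le_mul_of_nonneg_left (norm_r_le z h n) (by positivity)

lemma summable_norm_r_smul (z h : ℍ[ℝ]) :
    Summable fun n => ‖((n.factorial : ℝ)⁻¹) • r z h n‖ :=
  (summable_R ‖z‖ ‖h‖).of_nonneg_of_le (fun n => norm_nonneg _) (norm_smul_r_le z h)

lemma norm_tsum_r_le (z h : ℍ[ℝ]) :
    ‖∑' n, ((n.factorial : ℝ)⁻¹) • r z h n‖
      ≤ Real.exp (‖z‖ + ‖h‖) - Real.exp ‖z‖ - Real.exp ‖z‖ * ‖h‖ := by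
  calc ‖∑' n, ((n.factorial : ℝ)⁻¹) • r z h n‖
      ≤ ∑' n, ‖((n.factorial : ℝ)⁻¹) • r z h n‖ :=
        norm_tsum_le_tsum_norm (summable_norm_r_smul z h)
    _ ≤ ∑' n : ℕ, ((‖z‖ + ‖h‖) ^ n - ‖z‖ ^ n - (n : ℝ) * ‖z‖ ^ (n - 1) * ‖h‖)
          / (n.factorial : ℝ) :=
        Summable.tsum_le_tsum (norm_smul_r_le z h) (summable_norm_r_smul z h) (summable_R ‖z‖ ‖h‖)
    _ = Real.exp (‖z‖ + ‖h‖) - Real.exp ‖z‖ - Real.exp ‖z‖ * ‖h‖ := tsum_R_eq ‖z‖ ‖h‖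

lemma key (z h : ℍ[ℝ]) :
    qexp (z + h) - qexp z
        - (∑' k : ℕ, (∑' j : ℕ, (((j + k + 1).factorial : ℝ)⁻¹) • z ^ j) * h * z ^ k)
      = ∑' n, ((n.factorial : ℝ)⁻¹) • r z h n := by
  have hsub : qexp (z + h) - qexp z
      = ∑' n, (((n.factorial : ℝ)⁻¹) • S z h n + ((n.factorial : ℝ)⁻¹) • r z h n) := by
    unfold qexp
    rw [← Summable.tsum_sub (summable_expSeries (z + h)) (summable_expSeries z)]
    refine tsum_congr fun n => ?_
    rw [← smul_add, ← smul_sub]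
    congr 1
    unfold r
    abel
  rw [hsub, Summable.tsum_add (summable_S_smul z h) (summable_r_smul z h), ← tsum_F_eq_S, tsum_F_eq_T]
  abel

lemma summable_norm_c_inner (z : ℍ[ℝ]) (k : ℕ) :
    Summable fun j : ℕ => ‖(((j + k + 1).factorial : ℝ)⁻¹) • z ^ j‖ := by
  refine ((Real.summable_pow_div_factorial ‖z‖).mul_right
    ((k.factorial : ℝ))⁻¹).of_nonneg_of_le (fun j => norm_nonneg _) fun j => ?_
  rw [norm_smul, Real.norm_eq_abs, abs_inv, Nat.abs_cast, norm_pow]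
  calc (((j + k + 1).factorial : ℝ))⁻¹ * ‖z‖ ^ j
      ≤ ((j.factorial : ℝ))⁻¹ * ((k.factorial : ℝ))⁻¹ * ‖z‖ ^ j := by
        have := inv_fact_le j k
        have h1 : (0:ℝ) ≤ ‖z‖ ^ j := by positivity
        gcongr
    _ = ‖z‖ ^ j / (j.factorial : ℝ) * ((k.factorial : ℝ))⁻¹ := by ring

lemma norm_c_le (z : ℍ[ℝ]) (k : ℕ) :
    ‖∑' j : ℕ, (((j + k + 1).factorial : ℝ)⁻¹) • z ^ j‖
      ≤ (∑' j : ℕ, ‖z‖ ^ j / (j.factorial : ℝ)) * ((k.factorial : ℝ))⁻¹ := by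
  calc ‖∑' j : ℕ, (((j + k + 1).factorial : ℝ)⁻¹) • z ^ j‖
      ≤ ∑' j : ℕ, ‖(((j + k + 1).factorial : ℝ)⁻¹) • z ^ j‖ :=
        norm_tsum_le_tsum_norm (summable_norm_c_inner z k)
    _ ≤ ∑' j : ℕ, ‖z‖ ^ j / (j.factorial : ℝ) * ((k.factorial : ℝ))⁻¹ := by
        refine Summable.tsum_le_tsum (fun j => ?_) (summable_norm_c_inner z k)
          ((Real.summable_pow_div_factorial ‖z‖).mul_right _)
        rw [norm_smul, Real.norm_eq_abs, abs_inv, Nat.abs_cast, norm_pow]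
        calc (((j + k + 1).factorial : ℝ))⁻¹ * ‖z‖ ^ j
            ≤ ((j.factorial : ℝ))⁻¹ * ((k.factorial : ℝ))⁻¹ * ‖z‖ ^ j := by
              have := inv_fact_le j k
              have h1 : (0:ℝ) ≤ ‖z‖ ^ j := by positivity
              gcongr
          _ = ‖z‖ ^ j / (j.factorial : ℝ) * ((k.factorial : ℝ))⁻¹ := by ring
    _ = (∑' j : ℕ, ‖z‖ ^ j / (j.factorial : ℝ)) * ((k.factorial : ℝ))⁻¹ := tsum_mul_right

lemma summable_c (z : ℍ[ℝ]) :
    Summable fun k : ℕ =>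
      ‖∑' j : ℕ, (((j + k + 1).factorial : ℝ)⁻¹) • z ^ j‖ * ‖z ^ k‖ := by
  set E := ∑' j : ℕ, ‖z‖ ^ j / (j.factorial : ℝ) with hE
  have hsum : Summable fun k : ℕ => E * ((k.factorial : ℝ))⁻¹ * ‖z‖ ^ k := by
    have : (fun k : ℕ => E * ((k.factorial : ℝ))⁻¹ * ‖z‖ ^ k)
        = fun k : ℕ => ‖z‖ ^ k / (k.factorial : ℝ) * E := by
      funext k; rw [div_eq_mul_inv]; ring
    rw [this]
    exact (Real.summable_pow_div_factorial ‖z‖).mul_right E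
  refine hsum.of_nonneg_of_le
    (fun k => mul_nonneg (norm_nonneg _) (norm_nonneg _)) fun k => ?_
  rw [norm_pow]
  have h1 := norm_c_le z k
  have h2 : (0:ℝ) ≤ ‖z‖ ^ k := by positivity
  calc ‖∑' j : ℕ, (((j + k + 1).factorial : ℝ)⁻¹) • z ^ j‖ * ‖z‖ ^ k
      ≤ E * ((k.factorial : ℝ))⁻¹ * ‖z‖ ^ k := mul_le_mul_of_nonneg_right h1 h2

end QexpAux

/-- The increment of the quaternionic exponential admits the expansion
`qexp (z + h) - qexp z = ∑' k, c k * h * z^k + o(‖h‖)` where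
`c k = ∑' j, z^j / (j+k+1)!`, with `∑' k, ‖c k‖ * ‖z^k‖ < ∞`; hence `qexp` is
H-differentiable at `z` with witness sequences `A k = c k`, `B k = z^k`. -/
theorem qexp_increment_expansion (z : ℍ[ℝ]) :
    (Summable fun k : ℕ =>
      ‖∑' j : ℕ, (((j + k + 1).factorial : ℝ)⁻¹) • z ^ j‖ * ‖z ^ k‖) ∧
    Filter.Tendsto
      (fun h : ℍ[ℝ] =>
        ‖qexp (z + h) - qexp z -
            ∑' k : ℕ, (∑' j : ℕ, (((j + k + 1).factorial : ℝ)⁻¹) • z ^ j) * h * z ^ k‖ / ‖h‖)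
      (𝓝[≠] (0 : ℍ[ℝ])) (𝓝 0) ∧
    HDiffAt qexp z
      (∑' k : ℕ, (∑' j : ℕ, (((j + k + 1).factorial : ℝ)⁻¹) • z ^ j) * z ^ k) := by
  have hc1 := QexpAux.summable_c z
  set a := ‖z‖ with ha
  have htend : Filter.Tendsto
      (fun h : ℍ[ℝ] =>
        ‖qexp (z + h) - qexp z -
            ∑' k : ℕ, (∑' j : ℕ, (((j + k + 1).factorial : ℝ)⁻¹) • z ^ j) * h * z ^ k‖ / ‖h‖)
      (𝓝[≠] (0 : ℍ[ℝ])) (𝓝 0) := by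
    have hd : HasDerivAt (fun t : ℝ => Real.exp (a + t)) (Real.exp a) 0 := by
      have := (Real.hasDerivAt_exp (a + 0)).comp 0 ((hasDerivAt_id (0:ℝ)).const_add a)
      simpa [Function.comp_def] using this
    have hG0 := hasDerivAt_iff_tendsto.mp hd
    have hn : Filter.Tendsto (fun h : ℍ[ℝ] => ‖h‖) (𝓝[≠] (0:ℍ[ℝ])) (𝓝 (0:ℝ)) := by
      have : Filter.Tendsto (fun h : ℍ[ℝ] => ‖h‖) (𝓝 (0:ℍ[ℝ])) (𝓝 (0:ℝ)) := by
        simpa using continuous_norm.tendsto (0:ℍ[ℝ])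
      exact this.mono_left nhdsWithin_le_nhds
    have hG : Filter.Tendsto
        (fun h : ℍ[ℝ] =>
          ‖h‖⁻¹ * |Real.exp (a + ‖h‖) - Real.exp a - ‖h‖ * Real.exp a|)
        (𝓝[≠] (0:ℍ[ℝ])) (𝓝 0) := by
      have := hG0.comp hn
      simpa [Function.comp_def, smul_eq_mul] using this
    refine squeeze_zero' (Filter.Eventually.of_forall fun h =>
      div_nonneg (norm_nonneg _) (norm_nonneg _)) ?_ hG
    filter_upwards [self_mem_nhdsWithin] with h hh
    have hh' : h ≠ 0 := hh
    have hb : (0:ℝ) < ‖h‖ := norm_pos_iff.mpr hh'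
    rw [QexpAux.key z h]
    have h1 := QexpAux.norm_tsum_r_le z h
    have h2 : Real.exp (a + ‖h‖) - Real.exp a - Real.exp a * ‖h‖
        ≤ ‖Real.exp (a + ‖h‖) - Real.exp a - ‖h‖ * Real.exp a‖ := by
      rw [Real.norm_eq_abs, mul_comm ‖h‖ (Real.exp a)]
      exact le_abs_self _
    calc ‖∑' n, ((n.factorial : ℝ)⁻¹) • QexpAux.r z h n‖ / ‖h‖
        ≤ ‖Real.exp (a + ‖h‖) - Real.exp a - ‖h‖ * Real.exp a‖ / ‖h‖ := by
          gcongr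
          exact h1.trans h2
      _ = ‖h‖⁻¹ * |Real.exp (a + ‖h‖) - Real.exp a - ‖h‖ * Real.exp a| := by
          rw [Real.norm_eq_abs, div_eq_inv_mul]
  exact ⟨hc1, htend,
    ⟨fun k => ∑' j : ℕ, (((j + k + 1).factorial : ℝ)⁻¹) • z ^ j, fun k => z ^ k,
      hc1, htend, rfl⟩⟩
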